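/- arXiv:1204.3312 — 4 statements merged into one kernel-verified Lean document; each statement's English description precedes it below -/
import Mathlib

section
/- Let V be a vector space over a field k with a bilinear bracket [,] and a central element 1 (i.e. [1,v] = [v,1] = 0 for all v). Define σ : V ⊗ V → V ⊗ V by σ(v ⊗ w) = w ⊗ v + 1 ⊗ [v,w]. Then σ satisfies the Yang–Baxter equation on V^⊗3 if and only if the bracket satisfies the (right) Leibniz identity [v,[w,u]] = [[v,w],u] − [[v,u],w] for all v, w, u ∈ V, provided there exists a linear map γ : V → k with γ(1) = 1. -/
open TensorProduct

variable {k V : Type*} [Field k] [AddCommGroup V] [Module k V]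

/-- `σ ⊗ id` as an endomorphism of `V ⊗ (V ⊗ V)`. -/
noncomputable def sigma1 (σ : V ⊗[k] V →ₗ[k] V ⊗[k] V) :
    V ⊗[k] (V ⊗[k] V) →ₗ[k] V ⊗[k] (V ⊗[k] V) :=
  (TensorProduct.assoc k V V V).toLinearMap ∘ₗ (LinearMap.rTensor V σ) ∘ₗ
    (TensorProduct.assoc k V V V).symm.toLinearMap

/-- `id ⊗ σ` as an endomorphism of `V ⊗ (V ⊗ V)`. -/
noncomputable def sigma2 (σ : V ⊗[k] V →ₗ[k] V ⊗[k] V) :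
    V ⊗[k] (V ⊗[k] V) →ₗ[k] V ⊗[k] (V ⊗[k] V) :=
  LinearMap.lTensor V σ

/-- The Yang–Baxter equation for `σ : V ⊗ V → V ⊗ V`. -/
def YangBaxter (σ : V ⊗[k] V →ₗ[k] V ⊗[k] V) : Prop :=
  sigma1 σ ∘ₗ sigma2 σ ∘ₗ sigma1 σ = sigma2 σ ∘ₗ sigma1 σ ∘ₗ sigma2 σ

/-- The Leibniz braiding `σ(v ⊗ w) = w ⊗ v + 1 ⊗ [v,w]`. -/
noncomputable def leibnizBraiding (br : V →ₗ[k] V →ₗ[k] V) (one : V) :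
    V ⊗[k] V →ₗ[k] V ⊗[k] V :=
  (TensorProduct.comm k V V).toLinearMap +
    (TensorProduct.mk k V V one) ∘ₗ (TensorProduct.lift br)

lemma lb_apply (br : V →ₗ[k] V →ₗ[k] V) (one : V) (v w : V) :
    leibnizBraiding br one (v ⊗ₜ[k] w) = w ⊗ₜ[k] v + one ⊗ₜ[k] br v w := by
  simp [leibnizBraiding]

lemma s1_apply (br : V →ₗ[k] V →ₗ[k] V) (one : V) (v w u : V) :
    sigma1 (leibnizBraiding br one) (v ⊗ₜ[k] (w ⊗ₜ[k] u)) =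
      w ⊗ₜ[k] (v ⊗ₜ[k] u) + one ⊗ₜ[k] (br v w ⊗ₜ[k] u) := by
  simp [sigma1, lb_apply, add_tmul]

lemma s2_apply (br : V →ₗ[k] V →ₗ[k] V) (one : V) (v w u : V) :
    sigma2 (leibnizBraiding br one) (v ⊗ₜ[k] (w ⊗ₜ[k] u)) =
      v ⊗ₜ[k] (u ⊗ₜ[k] w) + v ⊗ₜ[k] (one ⊗ₜ[k] br w u) := by
  simp [sigma2, lb_apply, tmul_add]

/-- for a bilinear bracket with central element `1` and a linear map
`γ : V → k` with `γ(1) = 1`, the map `σ(v ⊗ w) = w ⊗ v + 1 ⊗ [v,w]` satisfies the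
Yang–Baxter equation iff the bracket satisfies the (right) Leibniz identity. -/
theorem leibniz_braiding_yang_baxter_iff_leibniz
    (br : V →ₗ[k] V →ₗ[k] V) (one : V)
    (hcentral_l : ∀ v : V, br one v = 0)
    (hcentral_r : ∀ v : V, br v one = 0)
    (γ : V →ₗ[k] k) (hγ : γ one = 1) :
    YangBaxter (leibnizBraiding br one) ↔
      ∀ v w u : V, br v (br w u) = br (br v w) u - br (br v u) w := by
  set g : V ⊗[k] V →ₗ[k] V :=
    (TensorProduct.lid k V).toLinearMap ∘ₗ LinearMap.rTensor V γ with hg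
  have hgt : ∀ a b : V, g (a ⊗ₜ[k] b) = γ a • b := by intro a b; simp [hg]
  set f : V ⊗[k] (V ⊗[k] V) →ₗ[k] V := g ∘ₗ LinearMap.lTensor V g with hf
  have hft : ∀ a b c : V, f (a ⊗ₜ[k] (b ⊗ₜ[k] c)) = γ a • (γ b • c) := by
    intro a b c; simp [hf, hgt, smul_comm (γ b) (γ a)]
  constructor
  · intro h v w u
    have h1 := DFunLike.congr_fun h (v ⊗ₜ[k] (w ⊗ₜ[k] u))
    simp only [LinearMap.comp_apply, s1_apply, s2_apply, map_add,
      hcentral_l, hcentral_r, tmul_zero, zero_tmul, add_zero, tmul_add] at h1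
    have h2 := congrArg f h1
    simp only [map_add, hft, hγ, one_smul] at h2
    linear_combination (norm := module) -h2
  · intro hL
    unfold YangBaxter
    ext v w u
    have key : br (br v w) u = br v (br w u) + br (br v u) w := by
      rw [hL v w u]; abel
    simp only [LinearMap.comp_apply, AlgebraTensorModule.curry_apply, curry_apply,
      LinearMap.coe_restrictScalars, s1_apply, s2_apply, map_add,
      hcentral_l, hcentral_r, tmul_zero, zero_tmul, add_zero, tmul_add, key]
    abel
end

section
/- Let (S, ◁) be a shelf. The two families of maps on the free module on S^n, d_{n;i}(a₁,…,aₙ) = (a₁◁aᵢ,…,a_{i−1}◁aᵢ,a_{i+1},…,aₙ) and d'_{n;i}(a₁,…,aₙ) = (a₁,…,â_i,…,aₙ) (omitting aᵢ), satisfy the mixed pre-bisimplicial identities d_i d'_j = d'_{j−1} d_i and d'_i d_j = d_{j−1} d'_i for all 1 ≤ i < j ≤ n, as well as d_i d_j = d_{j−1} d_i and d'_i d'_j = d'_{j−1} d'_i for i < j. -/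
variable {k : Type*} [CommRing k] {S : Type*}

/-- The `i`-th face on tuples: `(a₁,…,a_{n+1}) ↦ (a₁◁aᵢ,…,a_{i−1}◁aᵢ,a_{i+1},…,a_{n+1})`. -/
def shelfFaceTuple (op : S → S → S) {n : ℕ} (i : Fin (n+1)) (a : Fin (n+1) → S) :
    Fin n → S :=
  fun p => if (p : ℕ) < (i : ℕ) then op (a p.castSucc) (a i) else a p.succ

/-- The `i`-th deleting face on tuples: `(a₁,…,a_{n+1}) ↦ (a₁,…,âᵢ,…,a_{n+1})`. -/
def delFaceTuple {n : ℕ} (i : Fin (n+1)) (a : Fin (n+1) → S) : Fin n → S :=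
  fun p => if (p : ℕ) < (i : ℕ) then a p.castSucc else a p.succ

variable (k) in
/-- The linearized face `d_{n+1;i}`. -/
noncomputable def fd (op : S → S → S) (n : ℕ) (i : Fin (n+1)) :
    ((Fin (n+1) → S) →₀ k) →ₗ[k] ((Fin n → S) →₀ k) :=
  Finsupp.lmapDomain k k (shelfFaceTuple op i)

variable (k S) in
/-- The linearized deleting face `d'_{n+1;i}`. -/
noncomputable def fd' (n : ℕ) (i : Fin (n+1)) :
    ((Fin (n+1) → S) →₀ k) →ₗ[k] ((Fin n → S) →₀ k) :=
  Finsupp.lmapDomain k k (delFaceTuple i)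


private theorem shelfTupleLemma {S : Type*} (op : S → S → S)
    (selfdistr : ∀ a b c : S, op (op a b) c = op (op a c) (op b c))
    (m : ℕ) (i : Fin (m+1)) (j : Fin (m+2)) (hij : (i : ℕ) < (j : ℕ)) :
    (shelfFaceTuple op i ∘ shelfFaceTuple op j =
      shelfFaceTuple op ⟨(j : ℕ) - 1, by omega⟩ ∘ shelfFaceTuple op i.castSucc) ∧
    (delFaceTuple i ∘ delFaceTuple j =
      delFaceTuple ⟨(j : ℕ) - 1, by omega⟩ ∘ delFaceTuple (S := S) i.castSucc) ∧
    (shelfFaceTuple op i ∘ delFaceTuple j =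
      delFaceTuple ⟨(j : ℕ) - 1, by omega⟩ ∘ shelfFaceTuple op i.castSucc) ∧
    (delFaceTuple i ∘ shelfFaceTuple op j =
      shelfFaceTuple op ⟨(j : ℕ) - 1, by omega⟩ ∘ delFaceTuple i.castSucc) := by
  have hj : (j : ℕ) < m + 2 := j.isLt
  refine ⟨?_, ?_, ?_, ?_⟩ <;>
  · funext a p
    have hp : (p : ℕ) < m := p.isLt
    simp only [Function.comp_apply, shelfFaceTuple, delFaceTuple, Fin.coe_castSucc,
      Fin.val_succ, Fin.castSucc_mk, Fin.succ_mk]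
    split_ifs <;>
      first
      | omega
      | rfl
      | (rw [← selfdistr]; congr 1 <;>
          exact congrArg a (Fin.ext (by
            (try simp only [Fin.coe_castSucc, Fin.val_succ, Fin.val_mk]); omega)))
      | (congr 1 <;>
          exact congrArg a (Fin.ext (by
            (try simp only [Fin.coe_castSucc, Fin.val_succ, Fin.val_mk]); omega)))
      | exact congrArg a (Fin.ext (by
            (try simp only [Fin.coe_castSucc, Fin.val_succ, Fin.val_mk]); omega))

/-- for a shelf `(S, ◁)`, the faces `d_{n;i}` and `d'_{n;i}` satisfy the
pre-bisimplicial identities `dᵢdⱼ = d_{j−1}dᵢ`, `d'ᵢd'ⱼ = d'_{j−1}d'ᵢ`,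
`dᵢd'ⱼ = d'_{j−1}dᵢ` and `d'ᵢdⱼ = d_{j−1}d'ᵢ` for `1 ≤ i < j ≤ n` (0-indexed below). -/
theorem shelf_faces_pre_bisimplicial
    (op : S → S → S)
    (selfdistr : ∀ a b c : S, op (op a b) c = op (op a c) (op b c)) :
    ∀ (m : ℕ) (i : Fin (m+1)) (j : Fin (m+2)), (i : ℕ) < (j : ℕ) →
      (fd k op m i ∘ₗ fd k op (m+1) j =
        fd k op m ⟨(j : ℕ) - 1, by omega⟩ ∘ₗ fd k op (m+1) i.castSucc) ∧
      (fd' k S m i ∘ₗ fd' k S (m+1) j =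
        fd' k S m ⟨(j : ℕ) - 1, by omega⟩ ∘ₗ fd' k S (m+1) i.castSucc) ∧
      (fd k op m i ∘ₗ fd' k S (m+1) j =
        fd' k S m ⟨(j : ℕ) - 1, by omega⟩ ∘ₗ fd k op (m+1) i.castSucc) ∧
      (fd' k S m i ∘ₗ fd k op (m+1) j =
        fd k op m ⟨(j : ℕ) - 1, by omega⟩ ∘ₗ fd' k S (m+1) i.castSucc) := by
  intro m i j hij
  obtain ⟨h1, h2, h3, h4⟩ := shelfTupleLemma op selfdistr m i j hij
  refine ⟨?_, ?_, ?_, ?_⟩ <;>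
    simp only [fd, fd', ← Finsupp.lmapDomain_comp, h1, h2, h3, h4]
end

section
/- Let (S, ◁) be a rack, i.e. a shelf such that for every b ∈ S the map a ↦ a ◁ b is bijective. Then the shelf complex (kS^⊗n, d) with d(a₁,…,aₙ) = Σ_{i=1}^n (−1)^{i−1}(a₁◁aᵢ,…,a_{i−1}◁aᵢ,a_{i+1},…,aₙ) is acyclic in positive degrees: fixing any b ∈ S, the map h(a₁,…,aₙ) = (−1)^n (a₁,…,aₙ,b) composed with the inverse diagonal map π_b^{−1}(a₁,…,aₙ) = (a₁ ◁̃ b, …, aₙ ◁̃ b) provides a contracting homotopy, where ◁̃ denotes the inverse of right translation by b. -/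
variable {k : Type*} [CommRing k] {S : Type*}

variable (k) in
/-- The one-term distributive differential
`d(a₁,…,aₙ) = Σᵢ (−1)^{i−1}(a₁◁aᵢ,…,a_{i−1}◁aᵢ,a_{i+1},…,aₙ)`. -/
noncomputable def shelfD (op : S → S → S) (n : ℕ) :
    ((Fin (n+1) → S) →₀ k) →ₗ[k] ((Fin n → S) →₀ k) :=
  ∑ i : Fin (n+1), ((-1 : k)^(i : ℕ)) • Finsupp.lmapDomain k k (shelfFaceTuple op i)

variable (k) in
/-- The homotopy `(a₁,…,aₙ) ↦ (−1)ⁿ (a₁ ◁̃ b, …, aₙ ◁̃ b, b ◁̃ b)`, i.e. right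
concatenation with `b` followed by the inverse diagonal map `π_b^{−1}`. -/
noncomputable def rackH (invop : S → S → S) (b : S) (n : ℕ) :
    ((Fin n → S) →₀ k) →ₗ[k] ((Fin (n+1) → S) →₀ k) :=
  ((-1 : k)^n) • Finsupp.lmapDomain k k
    (fun (a : Fin n → S) (p : Fin (n+1)) =>
      invop (if h : (p : ℕ) < n then a ⟨p, h⟩ else b) b)

/-- The tuple-level map underlying the homotopy. -/
def rackGT (invop : S → S → S) (b : S) (n : ℕ) (a : Fin n → S) : Fin (n+1) → S :=
  fun p => invop (if h : (p : ℕ) < n then a ⟨p, h⟩ else b) b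

lemma rackH_eq (invop : S → S → S) (b : S) (n : ℕ) :
    rackH k invop b n = ((-1 : k)^n) • Finsupp.lmapDomain k k (rackGT invop b n) := rfl

lemma shelfD_single (op : S → S → S) (n : ℕ) (a : Fin (n+1) → S) (v : k) :
    shelfD k op n (Finsupp.single a v)
      = ∑ i : Fin (n+1), ((-1 : k)^(i : ℕ)) • Finsupp.single (shelfFaceTuple op i a) v := by
  simp [shelfD, Finsupp.mapDomain_single]

lemma rackH_single (invop : S → S → S) (b : S) (n : ℕ) (a : Fin n → S) (v : k) :
    rackH k invop b n (Finsupp.single a v)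
      = ((-1 : k)^n) • Finsupp.single (rackGT invop b n a) v := by
  rw [rackH_eq]
  simp [Finsupp.mapDomain_single]

/-- for a rack `(S, ◁, ◁̃)` and `b ∈ S`, the shelf complex is acyclic in
positive degrees: the composite of right concatenation with `b` (with sign `(−1)ⁿ`)
and the inverse diagonal map `π_b^{−1}` is a contracting homotopy. -/
theorem rack_shelf_complex_acyclic
    (op invop : S → S → S)
    (selfdistr : ∀ a b c : S, op (op a b) c = op (op a c) (op b c))
    (hinv₁ : ∀ a b : S, invop (op a b) b = a)
    (hinv₂ : ∀ a b : S, op (invop a b) b = a)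
    (b : S) :
    ∀ n : ℕ,
      (rackH k invop b n ∘ₗ shelfD k op n + shelfD k op (n+1) ∘ₗ rackH k invop b (n+1) =
        LinearMap.id) ∧
      (∀ x : (Fin (n+1) → S) →₀ k, shelfD k op n x = 0 →
        ∃ y : (Fin (n+2) → S) →₀ k, shelfD k op (n+1) y = x) := by
  -- injectivity of right translation by `b`
  have inj : ∀ x y : S, op x b = op y b → x = y := by
    intro x y h
    have := congrArg (fun z => invop z b) h
    simpa [hinv₁] using this
  -- `π_b^{-1}` is a shelf morphism
  have dist : ∀ x y : S, invop (op x y) b = op (invop x b) (invop y b) := by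
    intro x y
    apply inj
    rw [hinv₂, selfdistr, hinv₂, hinv₂]
  have hbb : ∀ x : S, op x (invop b b) = op x b := by
    intro x
    apply inj
    rw [selfdistr, hinv₂]
  -- tuple-level commutation of faces with the homotopy
  have keyA : ∀ (n : ℕ) (j : Fin (n+1)) (a : Fin (n+1) → S),
      shelfFaceTuple op j.castSucc (rackGT invop b (n+1) a)
        = rackGT invop b n (shelfFaceTuple op j a) := by
    intro n j a
    funext p
    simp only [shelfFaceTuple, rackGT, Fin.coe_castSucc, Fin.val_succ]
    by_cases hp : (p : ℕ) < (j : ℕ)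
    · have hpn : (p : ℕ) < n := lt_of_lt_of_le hp (Nat.lt_succ_iff.mp j.isLt)
      have hp1 : (p : ℕ) < n + 1 := Nat.lt_succ_of_lt hpn
      have hj1 : (j : ℕ) < n + 1 := j.isLt
      rw [if_pos hp, dif_pos hp1, dif_pos hj1, dif_pos hpn, if_pos hp, dist]
      rfl
    · rw [if_neg hp]
      by_cases hpn : (p : ℕ) < n
      · rw [dif_pos (by omega : (p : ℕ) + 1 < n + 1), dif_pos hpn, if_neg hp]
        exact congrArg (fun z => invop z b) (congrArg a (by simp [Fin.ext_iff]))
      · rw [dif_neg (by omega : ¬ ((p : ℕ) + 1 < n + 1)), dif_neg hpn]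
  -- the last face undoes the homotopy
  have keyB : ∀ (n : ℕ) (a : Fin (n+1) → S),
      shelfFaceTuple op (Fin.last (n+1)) (rackGT invop b (n+1) a) = a := by
    intro n a
    funext p
    simp only [shelfFaceTuple, rackGT, Fin.val_last, Fin.coe_castSucc, Fin.val_succ]
    rw [if_pos p.isLt, dif_pos (p.isLt : (p : ℕ) < n + 1),
      dif_neg (by omega : ¬ ((n + 1 : ℕ) < n + 1)), hbb, hinv₂]
  -- the homotopy identity
  have hom : ∀ n : ℕ,
      rackH k invop b n ∘ₗ shelfD k op n + shelfD k op (n+1) ∘ₗ rackH k invop b (n+1) =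
        (LinearMap.id : ((Fin (n+1) → S) →₀ k) →ₗ[k] _) := by
    intro n
    apply Finsupp.lhom_ext
    intro a v
    have e1 : rackH k invop b n (shelfD k op n (Finsupp.single a v))
        = ∑ i : Fin (n+1), ((-1 : k)^(i : ℕ) * (-1 : k)^n) •
            Finsupp.single (rackGT invop b n (shelfFaceTuple op i a)) v := by
      rw [shelfD_single, map_sum]
      refine Finset.sum_congr rfl fun i _ => ?_
      rw [map_smul, rackH_single, smul_smul]
    have e2 : shelfD k op (n+1) (rackH k invop b (n+1) (Finsupp.single a v))
        = (∑ i : Fin (n+1), ((-1 : k)^(n+1) * (-1 : k)^(i : ℕ)) •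
            Finsupp.single (rackGT invop b n (shelfFaceTuple op i a)) v)
          + Finsupp.single a v := by
      rw [rackH_single, map_smul, shelfD_single, Fin.sum_univ_castSucc, smul_add,
        Finset.smul_sum]
      congr 1
      · refine Finset.sum_congr rfl fun i _ => ?_
        rw [keyA n i a, smul_smul, Fin.coe_castSucc]
      · rw [keyB n a, Fin.val_last, smul_smul, ← pow_add,
          Even.neg_one_pow ⟨n+1, by ring⟩, one_smul]
    rw [LinearMap.add_apply, LinearMap.comp_apply, LinearMap.comp_apply,
      LinearMap.id_apply, e1, e2, ← add_assoc, ← Finset.sum_add_distrib]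
    have hz : (∑ i : Fin (n+1),
        (((-1 : k)^(i : ℕ) * (-1 : k)^n) •
            Finsupp.single (rackGT invop b n (shelfFaceTuple op i a)) v
          + ((-1 : k)^(n+1) * (-1 : k)^(i : ℕ)) •
            Finsupp.single (rackGT invop b n (shelfFaceTuple op i a)) v)) = 0 := by
      refine Finset.sum_eq_zero fun i _ => ?_
      rw [← add_smul]
      have : ((-1 : k)^(i : ℕ) * (-1 : k)^n + (-1 : k)^(n+1) * (-1 : k)^(i : ℕ)) = 0 := by
        rw [pow_succ]; ring
      rw [this, zero_smul]
    rw [hz, zero_add]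
  intro n
  refine ⟨hom n, fun x hx => ⟨rackH k invop b (n+1) x, ?_⟩⟩
  have h := LinearMap.congr_fun (hom n) x
  simpa [hx] using h
end

section
/- Let (S, ◁) be a shelf possessing an element a satisfying a ◁ b = a for all b ∈ S. Then the one-term distributive complex (kS^⊗n, d) with d(a₁,…,aₙ) = Σ_{i=1}^n (−1)^{i−1}(a₁◁aᵢ,…,a_{i−1}◁aᵢ,a_{i+1},…,aₙ) is acyclic in positive degrees. -/
variable {k : Type*} [CommRing k] {S : Type*}

/-- if a shelf `(S, ◁)` has an element `a` with `a ◁ b = a` for all `b`,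
then the one-term distributive complex is acyclic in positive degrees. -/
theorem shelf_complex_acyclic_of_fixed_element
    (op : S → S → S)
    (selfdistr : ∀ a b c : S, op (op a b) c = op (op a c) (op b c))
    (a : S) (hfix : ∀ b : S, op a b = a) :
    ∀ (n : ℕ) (x : (Fin (n+1) → S) →₀ k), shelfD k op n x = 0 →
      ∃ y : (Fin (n+2) → S) →₀ k, shelfD k op (n+1) y = x := by
  intro n x hx
  have hface0 : ∀ t : Fin (n+1) → S,
      shelfFaceTuple op (0 : Fin (n+2)) (Fin.cons a t) = t := by
    intro t
    funext p
    simp [shelfFaceTuple, Fin.cons_succ]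
  have hfaceS : ∀ (i : Fin (n+1)) (t : Fin (n+1) → S),
      shelfFaceTuple op i.succ (Fin.cons a t) = Fin.cons a (shelfFaceTuple op i t) := by
    intro i t
    funext p
    refine Fin.cases ?_ ?_ p
    · simp [shelfFaceTuple, hfix]
    · intro q
      by_cases h : (q : ℕ) < (i : ℕ)
      · have hc : ((q.succ : Fin (n+1)) : ℕ) < ((i.succ : Fin (n+2)) : ℕ) := by
          simpa using h
        simp only [shelfFaceTuple, if_pos hc, Fin.cons_succ, ← Fin.succ_castSucc]
        simp [Fin.cons_succ, if_pos h]
      · simp [shelfFaceTuple, h, Fin.cons_succ]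
  refine ⟨Finsupp.mapDomain (Fin.cons a) x, ?_⟩
  have expand : ∀ (m : ℕ) (z : (Fin (m+1) → S) →₀ k),
      shelfD k op m z = ∑ i : Fin (m+1), ((-1 : k)^(i : ℕ)) •
        Finsupp.mapDomain (shelfFaceTuple op i) z := by
    intro m z
    simp [shelfD, Finsupp.lmapDomain_apply]
  rw [expand, Fin.sum_univ_succ]
  have h0 : Finsupp.mapDomain (shelfFaceTuple op (0 : Fin (n+2)))
      (Finsupp.mapDomain (Fin.cons a) x) = x := by
    rw [← Finsupp.mapDomain_comp]
    have : (shelfFaceTuple op (0 : Fin (n+2))) ∘ (Fin.cons a) = id := by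
      funext t; exact hface0 t
    rw [this, Finsupp.mapDomain_id]
  have hrest : ∑ i : Fin (n+1), ((-1 : k)^((i.succ : Fin (n+2)) : ℕ)) •
      Finsupp.mapDomain (shelfFaceTuple op i.succ) (Finsupp.mapDomain (Fin.cons a) x)
      = 0 := by
    have step : ∀ i : Fin (n+1),
        Finsupp.mapDomain (shelfFaceTuple op i.succ) (Finsupp.mapDomain (Fin.cons a) x)
        = Finsupp.mapDomain (Fin.cons a) (Finsupp.mapDomain (shelfFaceTuple op i) x) := by
      intro i
      rw [← Finsupp.mapDomain_comp, ← Finsupp.mapDomain_comp]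
      congr 1
      funext t
      exact hfaceS i t
    calc ∑ i : Fin (n+1), ((-1 : k)^((i.succ : Fin (n+2)) : ℕ)) •
          Finsupp.mapDomain (shelfFaceTuple op i.succ) (Finsupp.mapDomain (Fin.cons a) x)
        = ∑ i : Fin (n+1), (-(1:k)) • (((-1 : k)^(i : ℕ)) •
          Finsupp.mapDomain (Fin.cons a) (Finsupp.mapDomain (shelfFaceTuple op i) x)) := by
          refine Finset.sum_congr rfl fun i _ => ?_
          rw [step i, smul_smul, Fin.val_succ, pow_succ]
          ring_nf
      _ = (-(1:k)) • Finsupp.mapDomain (Fin.cons a)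
          (∑ i : Fin (n+1), ((-1 : k)^(i : ℕ)) •
            Finsupp.mapDomain (shelfFaceTuple op i) x) := by
          rw [← Finset.smul_sum]
          congr 1
          rw [Finsupp.mapDomain_finset_sum]
          refine Finset.sum_congr rfl fun i _ => ?_
          rw [Finsupp.mapDomain_smul]
      _ = 0 := by
          rw [← expand n x, hx, Finsupp.mapDomain_zero, smul_zero]
  rw [hrest, h0]
  simp
end
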